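/- Let y : Fin k → ℝ be nondecreasing with 0 ≤ y 0, let δ : Fin k → ℝ be nonnegative. Then ∏_{i<k} (y i + δ i) ≥ (∏_{i<k-1} y i) · (y (k-1) + ∑_{i<k} δ i). -/

import Mathlib

open Finset

lemma aux_prod {ι : Type*} [DecidableEq ι] (a c : ι → ℝ) (b : ℝ) (hb : 0 ≤ b)
    (s : Finset ι) (ha : ∀ i ∈ s, 0 ≤ a i) (hab : ∀ i ∈ s, a i ≤ b)
    (hc : ∀ i ∈ s, 0 ≤ c i) :
    ∀ d : ℝ, 0 ≤ d →
      (∏ i ∈ s, a i) * (b + d + ∑ i ∈ s, c i) ≤ (∏ i ∈ s, (a i + c i)) * (b + d) := by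
  induction s using Finset.induction_on with
  | empty => simp
  | @insert j s hj ih =>
    intro d hd
    have haj := ha j (mem_insert_self j s)
    have hcj := hc j (mem_insert_self j s)
    have habj := hab j (mem_insert_self j s)
    have ih' := ih (fun i hi => ha i (mem_insert_of_mem hi))
      (fun i hi => hab i (mem_insert_of_mem hi))
      (fun i hi => hc i (mem_insert_of_mem hi)) (d + c j) (add_nonneg hd hcj)
    rw [Finset.prod_insert hj, Finset.prod_insert hj, Finset.sum_insert hj]
    have hA : 0 ≤ ∏ i ∈ s, a i := Finset.prod_nonneg (fun i hi => ha i (mem_insert_of_mem hi))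
    have hP : 0 ≤ ∏ i ∈ s, (a i + c i) :=
      Finset.prod_nonneg (fun i hi => add_nonneg (ha i (mem_insert_of_mem hi)) (hc i (mem_insert_of_mem hi)))
    nlinarith [mul_le_mul_of_nonneg_left ih' haj,
      mul_nonneg hP (mul_nonneg hcj (by linarith : (0:ℝ) ≤ b + d - a j))]

theorem stmt2 (m : ℕ) (y δ : Fin (m + 1) → ℝ) (hy : Monotone y) (hy0 : 0 ≤ y 0)
    (hδ : ∀ i, 0 ≤ δ i) :
    ∏ i, (y i + δ i) ≥
      (∏ i ∈ Finset.univ.erase (Fin.last m), y i) * (y (Fin.last m) + ∑ i, δ i) := by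
  have hmem : Fin.last m ∈ (Finset.univ : Finset (Fin (m+1))) := Finset.mem_univ _
  have key := aux_prod y δ (y (Fin.last m)) (le_trans hy0 (hy (Fin.zero_le _)))
    (Finset.univ.erase (Fin.last m))
    (fun i _ => le_trans hy0 (hy (Fin.zero_le _)))
    (fun i _ => hy (Fin.le_last i))
    (fun i _ => hδ i) (δ (Fin.last m)) (hδ _)
  have hprod : (∏ i ∈ Finset.univ.erase (Fin.last m), (y i + δ i)) * (y (Fin.last m) + δ (Fin.last m))
      = ∏ i, (y i + δ i) := Finset.prod_erase_mul _ _ hmem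
  have hsum : (∑ i ∈ Finset.univ.erase (Fin.last m), δ i) + δ (Fin.last m) = ∑ i, δ i :=
    Finset.sum_erase_add _ _ hmem
  rw [ge_iff_le, ← hprod]
  calc (∏ i ∈ Finset.univ.erase (Fin.last m), y i) * (y (Fin.last m) + ∑ i, δ i)
      = (∏ i ∈ Finset.univ.erase (Fin.last m), y i) *
        (y (Fin.last m) + δ (Fin.last m) + ∑ i ∈ Finset.univ.erase (Fin.last m), δ i) := by
        rw [← hsum]; ring
    _ ≤ _ := key
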